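/- Let K be a number field of degree d with unit rank r ≥ 1. Then ρ_∞(K) ≥ (d/s)·b(O_K^×), where b(O_K^×) is the infimum of the Weil heights h(u) over all units u ∈ O_K^× that are not roots of unity. -/

import Mathlib

open NumberField

/-- The logarithmic embedding of a unit: the coordinate at an infinite place `w`
is `mult w * log (w x)`. -/
noncomputable def logEmb (K : Type) [Field K] [NumberField K] (u : (𝓞 K)ˣ) :
    NumberField.InfinitePlace K → ℝ :=
  fun w => (w.mult : ℝ) * Real.log (w ((u : 𝓞 K) : K))

/-- The covering radius `ρ_∞(K)` of the lattice of units with respect to the sup norm. -/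
noncomputable def rhoInf (K : Type) [Field K] [NumberField K] : ℝ :=
  ⨆ v : {v : NumberField.InfinitePlace K → ℝ // ∑ w, v w = 0},
    ⨅ u : (𝓞 K)ˣ, ‖(v : NumberField.InfinitePlace K → ℝ) - logEmb K u‖

/-- The Weil height of an algebraic integer `x ∈ 𝓞 K`. -/
noncomputable def weilHeight (K : Type) [Field K] [NumberField K] (x : 𝓞 K) : ℝ :=
  (∑ σ : K →+* ℂ, max 0 (Real.log ‖σ (x : K)‖)) / (Module.finrank ℚ K : ℝ)

/-- `b(𝓞_K^×)`: the infimum of the Weil heights of units of `𝓞 K` which are not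
roots of unity. -/
noncomputable def bUnits (K : Type) [Field K] [NumberField K] : ℝ :=
  sInf {t : ℝ | ∃ u : (𝓞 K)ˣ, ¬ IsOfFinOrder u ∧ t = weilHeight K ((u : 𝓞 K))}

section Aux

variable (K : Type) [Field K] [NumberField K]

omit [NumberField K] in
lemma wpos (u : (𝓞 K)ˣ) (w : InfinitePlace K) : 0 < w ((u : 𝓞 K) : K) := by
  rw [NumberField.InfinitePlace.pos_iff]
  exact NumberField.Units.coe_ne_zero u

lemma logEmb_sum (u : (𝓞 K)ˣ) : ∑ w, logEmb K u w = 0 := by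
  have h0 : ∀ w : InfinitePlace K, (w ((u : 𝓞 K) : K)) ≠ 0 := fun w => (wpos K u w).ne'
  have h1 : |(Algebra.norm ℚ) (((u : 𝓞 K) : K))| = 1 := NumberField.Units.norm K u
  calc ∑ w, logEmb K u w
      = ∑ w : InfinitePlace K, Real.log ((w ((u : 𝓞 K) : K)) ^ (w.mult)) := by
        simp [logEmb, Real.log_pow]
    _ = Real.log (∏ w : InfinitePlace K, (w ((u : 𝓞 K) : K)) ^ (w.mult)) :=
        (Real.log_prod (fun w _ => pow_ne_zero _ (h0 w))).symm
    _ = 0 := by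
        rw [NumberField.InfinitePlace.prod_eq_abs_norm, h1]
        simp

lemma logEmb_eq_zero_iff (u : (𝓞 K)ˣ) : logEmb K u = 0 ↔ IsOfFinOrder u := by
  rw [← CommGroup.mem_torsion]
  rw [show (CommGroup.torsion (𝓞 K)ˣ) = NumberField.Units.torsion K from rfl,
    NumberField.Units.mem_torsion]
  constructor
  · intro h w
    have hw := congrFun h w
    simp only [logEmb, Pi.zero_apply, mul_eq_zero] at hw
    rcases hw with hw | hw
    · exact absurd hw (by exact_mod_cast NumberField.InfinitePlace.mult_ne_zero)
    · rcases Real.log_eq_zero.mp hw with h1 | h1 | h1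
      · exact absurd h1 (wpos K u w).ne'
      · exact h1
      · nlinarith [wpos K u w]
  · intro h
    funext w
    simp [logEmb, h w]

lemma logEmb_mul (x y : (𝓞 K)ˣ) : logEmb K (x * y) = logEmb K x + logEmb K y := by
  funext w
  have hx : (w ((x : 𝓞 K) : K)) ≠ 0 := (wpos K x w).ne'
  have hy : (w ((y : 𝓞 K) : K)) ≠ 0 := (wpos K y w).ne'
  have hc : (((x * y : (𝓞 K)ˣ) : 𝓞 K) : K) = ((x : 𝓞 K) : K) * ((y : 𝓞 K) : K) :=
    NumberField.Units.coe_mul x y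
  simp only [logEmb, Pi.add_apply, hc, map_mul, Real.log_mul hx hy]
  ring

lemma logEmb_one : logEmb K 1 = 0 := by
  have h : (((1 : (𝓞 K)ˣ) : 𝓞 K) : K) = 1 := rfl
  funext w
  simp [logEmb, h]

lemma logEmb_inv (x : (𝓞 K)ˣ) : logEmb K x⁻¹ = - logEmb K x := by
  have h := logEmb_mul K x x⁻¹
  rw [mul_inv_cancel, logEmb_one] at h
  funext w
  have := congrFun h w
  simp only [Pi.zero_apply, Pi.add_apply, Pi.neg_apply] at this ⊢
  linarith

lemma weil_sum (x : 𝓞 K) :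
    ∑ σ : K →+* ℂ, max 0 (Real.log ‖σ (x : K)‖)
      = ∑ w : InfinitePlace K, (w.mult : ℝ) * max 0 (Real.log (w (x : K))) := by
  classical
  rw [← Finset.sum_fiberwise Finset.univ (fun φ : K →+* ℂ => InfinitePlace.mk φ)
    (fun φ => max 0 (Real.log ‖φ (x : K)‖))]
  refine Finset.sum_congr rfl fun w _ => ?_
  rw [Finset.sum_congr rfl (g := fun _ => max 0 (Real.log (w (x : K))))
    (fun φ hφ => by
      rw [Finset.mem_filter] at hφ
      rw [← hφ.2, NumberField.InfinitePlace.apply]),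
    Finset.sum_const, NumberField.InfinitePlace.card_filter_mk_eq, nsmul_eq_mul]

lemma abs_logEmb_sum (u : (𝓞 K)ˣ) :
    ∑ w, |logEmb K u w|
      = 2 * ∑ σ : K →+* ℂ, max 0 (Real.log ‖σ ((u : 𝓞 K) : K)‖) := by
  rw [weil_sum]
  have e1 : ∀ w : InfinitePlace K,
      |logEmb K u w| = 2 * ((w.mult : ℝ) * max 0 (Real.log (w ((u : 𝓞 K) : K))))
        - logEmb K u w := by
    intro w
    have hm : (0:ℝ) ≤ (w.mult : ℝ) := Nat.cast_nonneg _
    simp only [logEmb]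
    rcases le_or_gt (Real.log (w ((u : 𝓞 K) : K))) 0 with h | h
    · rw [abs_of_nonpos (mul_nonpos_of_nonneg_of_nonpos hm h), max_eq_left h]
      ring
    · rw [abs_of_pos (mul_pos (by exact_mod_cast NumberField.InfinitePlace.mult_pos) h),
        max_eq_right h.le]
      ring
  rw [Finset.sum_congr rfl (fun w _ => e1 w), Finset.sum_sub_distrib, logEmb_sum,
    ← Finset.mul_sum]
  ring

lemma weilHeight_nonneg (x : 𝓞 K) : 0 ≤ weilHeight K x :=
  div_nonneg (Finset.sum_nonneg fun _ _ => le_max_left _ _) (Nat.cast_nonneg _)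

lemma bUnits_le (u : (𝓞 K)ˣ) (hu : ¬ IsOfFinOrder u) : bUnits K ≤ weilHeight K (u : 𝓞 K) :=
  csInf_le ⟨0, fun _ ⟨_, _, ht⟩ => ht ▸ weilHeight_nonneg K _⟩ ⟨u, hu, rfl⟩

lemma key_lower (u : (𝓞 K)ˣ) (hu : ¬ IsOfFinOrder u) :
    (Module.finrank ℚ K : ℝ) / (Fintype.card (NumberField.InfinitePlace K) : ℝ) * bUnits K
      ≤ ‖logEmb K u‖ / 2 := by
  set d : ℝ := (Module.finrank ℚ K : ℝ)
  set s : ℝ := (Fintype.card (NumberField.InfinitePlace K) : ℝ)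
  have hd : 0 < d := by
    have := Module.finrank_pos (R := ℚ) (M := K)
    positivity
  have hs : 0 < s := by
    have : 0 < Fintype.card (NumberField.InfinitePlace K) := Fintype.card_pos
    positivity
  have h1 : 2 * d * weilHeight K (u : 𝓞 K) = ∑ w, |logEmb K u w| := by
    rw [abs_logEmb_sum, weilHeight]
    field_simp
    rw [show (Module.finrank ℚ K : ℝ) = d from rfl, mul_div_cancel_left₀ _ hd.ne']
  have h2 : ∑ w, |logEmb K u w| ≤ s * ‖logEmb K u‖ := by
    have := Finset.sum_le_card_nsmul Finset.univ (fun w => |logEmb K u w|) ‖logEmb K u‖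
      (fun w _ => by simpa using norm_le_pi_norm (logEmb K u) w)
    simpa [s, mul_comm] using this
  have h3 : bUnits K ≤ weilHeight K (u : 𝓞 K) := bUnits_le K u hu
  have h4 : 2 * d * weilHeight K (u : 𝓞 K) ≤ s * ‖logEmb K u‖ := h1 ▸ h2
  rw [div_mul_eq_mul_div, div_le_div_iff₀ hs (by norm_num : (0:ℝ) < 2)]
  nlinarith [weilHeight_nonneg K (u : 𝓞 K)]

lemma logEmb_apply_ne' (u : (𝓞 K)ˣ)
    (w : {w : InfinitePlace K // w ≠ NumberField.Units.dirichletUnitTheorem.w₀}) :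
    NumberField.Units.logEmbedding K (Additive.ofMul u) w = logEmb K u w.1 :=
  NumberField.Units.dirichletUnitTheorem.logEmbedding_component u w

lemma bddAboveRange :
    BddAbove (Set.range fun v : {v : NumberField.InfinitePlace K → ℝ // ∑ w, v w = 0} =>
      ⨅ u : (𝓞 K)ˣ, ‖(v : NumberField.InfinitePlace K → ℝ) - logEmb K u‖) := by
  classical
  set b := (NumberField.Units.basisUnitLattice K).ofZLatticeBasis ℝ
    (NumberField.Units.unitLattice K) with hb
  obtain ⟨R, hR⟩ := (ZSpan.fundamentalDomain_isBounded b).exists_norm_le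
  set s : ℝ := (Fintype.card (NumberField.InfinitePlace K) : ℝ) with hs
  have hs1 : (1:ℝ) ≤ s := by
    rw [hs]
    exact Nat.one_le_cast.mpr Fintype.card_pos
  refine ⟨s * |R|, Set.forall_mem_range.mpr fun v => ?_⟩
  set x : {w : InfinitePlace K // w ≠ NumberField.Units.dirichletUnitTheorem.w₀} → ℝ :=
    fun w => v.1 w.1 with hx
  obtain ⟨⟨y, hy'⟩, hyF, -⟩ := ZSpan.exist_unique_vadd_mem_fundamentalDomain b x
  have hy := hy'
  rw [Module.Basis.ofZLatticeBasis_span ℝ (NumberField.Units.unitLattice K)] at hy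
  obtain ⟨z, -, hz⟩ := Submodule.mem_map.mp hy
  set u : (𝓞 K)ˣ := Additive.toMul z with hu
  have hzu : NumberField.Units.logEmbedding K (Additive.ofMul u) = y := hz
  set g : InfinitePlace K → ℝ := v.1 - logEmb K u⁻¹ with hg
  have hcoord : ∀ w : {w : InfinitePlace K // w ≠ NumberField.Units.dirichletUnitTheorem.w₀},
      g w.1 = (y + x) w := by
    intro w
    have := congrFun hzu w
    rw [logEmb_apply_ne'] at this
    simp only [hg, Pi.sub_apply, logEmb_inv, Pi.neg_apply, sub_neg_eq_add, Pi.add_apply, ← this,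
      hx]
    ring
  have hbound : ∀ w : {w : InfinitePlace K // w ≠ NumberField.Units.dirichletUnitTheorem.w₀},
      |g w.1| ≤ |R| := by
    intro w
    rw [hcoord w]
    have hRR : ‖y + x‖ ≤ R := by
      have h := hR _ hyF
      rwa [show (⟨y, hy'⟩ : Submodule.span ℤ (Set.range ⇑b)) +ᵥ x = y + x from rfl] at h
    calc |(y + x) w| ≤ ‖y + x‖ := by
          simpa using norm_le_pi_norm (y + x) w
      _ ≤ R := hRR
      _ ≤ |R| := le_abs_self R
  have hgsum : ∑ w, g w = 0 := by
    simp only [hg, Pi.sub_apply, Finset.sum_sub_distrib]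
    rw [logEmb_sum, v.2, sub_zero]
  have hw0 : |g (NumberField.Units.dirichletUnitTheorem.w₀)| ≤ s * |R| := by
    have hsplit : g (NumberField.Units.dirichletUnitTheorem.w₀) +
        ∑ w ∈ Finset.univ.erase (NumberField.Units.dirichletUnitTheorem.w₀), g w = 0 := by
      rw [Finset.add_sum_erase _ g (Finset.mem_univ _)]
      exact hgsum
    have h1 : |g (NumberField.Units.dirichletUnitTheorem.w₀)| =
        |∑ w ∈ Finset.univ.erase (NumberField.Units.dirichletUnitTheorem.w₀), g w| := by
      rw [show g (NumberField.Units.dirichletUnitTheorem.w₀) =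
        -∑ w ∈ Finset.univ.erase (NumberField.Units.dirichletUnitTheorem.w₀), g w by
          linarith, abs_neg]
    rw [h1]
    calc |∑ w ∈ Finset.univ.erase (NumberField.Units.dirichletUnitTheorem.w₀), g w|
        ≤ ∑ w ∈ Finset.univ.erase (NumberField.Units.dirichletUnitTheorem.w₀), |g w| :=
          Finset.abs_sum_le_sum_abs _ _
      _ ≤ (Finset.univ.erase (NumberField.Units.dirichletUnitTheorem.w₀)).card • |R| :=
          Finset.sum_le_card_nsmul _ _ _ (fun w hw =>
            hbound ⟨w, (Finset.mem_erase.mp hw).1⟩)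
      _ ≤ s * |R| := by
          rw [nsmul_eq_mul]
          have hcard : ((Finset.univ.erase
              (NumberField.Units.dirichletUnitTheorem.w₀ (K := K))).card : ℝ) ≤ s := by
            rw [hs]
            have h2 := Finset.card_le_univ
              (Finset.univ.erase (NumberField.Units.dirichletUnitTheorem.w₀ (K := K)))
            exact_mod_cast h2
          exact mul_le_mul_of_nonneg_right hcard (abs_nonneg R)
  have hnorm : ‖g‖ ≤ s * |R| := by
    rw [pi_norm_le_iff_of_nonneg (by positivity)]
    intro w
    by_cases hw : w = NumberField.Units.dirichletUnitTheorem.w₀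
    · subst hw
      simpa using hw0
    · refine le_trans ?_ (le_mul_of_one_le_left (abs_nonneg R) hs1)
      simpa using hbound ⟨w, hw⟩
  have hfin : ⨅ u' : (𝓞 K)ˣ, ‖(v : NumberField.InfinitePlace K → ℝ) - logEmb K u'‖
      ≤ ‖(v : NumberField.InfinitePlace K → ℝ) - logEmb K u⁻¹‖ :=
    ciInf_le ⟨0, by rintro t ⟨u', rfl⟩; exact norm_nonneg _⟩ u⁻¹
  exact hfin.trans (hg ▸ hnorm)

lemma exists_nontorsion (hr : 1 ≤ NumberField.Units.rank K) :
    ∃ u : (𝓞 K)ˣ, logEmb K u ≠ 0 := by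
  set i : Fin (NumberField.Units.rank K) := ⟨0, hr⟩
  refine ⟨NumberField.Units.fundSystem K i, fun h0 => ?_⟩
  have h1 : NumberField.Units.logEmbedding K
      (Additive.ofMul (NumberField.Units.fundSystem K i)) = 0 := by
    funext w
    rw [logEmb_apply_ne', h0]
    rfl
  rw [NumberField.Units.logEmbedding_fundSystem] at h1
  exact Module.Basis.ne_zero (NumberField.Units.basisUnitLattice K) i
    (by exact_mod_cast ZeroMemClass.coe_eq_zero.mp h1)

lemma exists_good (hr : 1 ≤ NumberField.Units.rank K) (c : ℝ) (hc : 0 < c)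
    (hlow : ∀ u : (𝓞 K)ˣ, logEmb K u ≠ 0 → c ≤ ‖logEmb K u‖) :
    ∃ u₀ : (𝓞 K)ˣ, logEmb K u₀ ≠ 0 ∧ ∀ u : (𝓞 K)ˣ, logEmb K u₀ ≠ logEmb K (u * u) := by
  by_contra hcon
  push_neg at hcon
  obtain ⟨u₁, h₁⟩ := exists_nontorsion K hr
  have hstep : ∀ n : ℕ, ∃ v : (𝓞 K)ˣ, logEmb K v ≠ 0 ∧
      logEmb K u₁ = (2 ^ n : ℝ) • logEmb K v := by
    intro n
    induction n with
    | zero => exact ⟨u₁, h₁, by simp⟩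
    | succ n ih =>
      obtain ⟨v, hv0, hveq⟩ := ih
      obtain ⟨u, hu⟩ := hcon v hv0
      have h2 : logEmb K v = (2 : ℝ) • logEmb K u := by
        rw [hu, logEmb_mul]
        funext w
        simp only [Pi.add_apply, Pi.smul_apply, smul_eq_mul]
        ring
      have hu0 : logEmb K u ≠ 0 := fun h => hv0 (by rw [h2, h, smul_zero])
      refine ⟨u, hu0, ?_⟩
      rw [hveq, h2, smul_smul]
      norm_num [pow_succ]
  obtain ⟨n, hn⟩ := pow_unbounded_of_one_lt (‖logEmb K u₁‖ / c) (by norm_num : (1:ℝ) < 2)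
  obtain ⟨v, hv0, hveq⟩ := hstep n
  have hnorm : ‖logEmb K u₁‖ = 2 ^ n * ‖logEmb K v‖ := by
    rw [hveq, norm_smul]
    congr 1
    simp [abs_of_pos (pow_pos (by norm_num : (0:ℝ) < 2) n)]
  have h3 := hlow v hv0
  have h4 : (0:ℝ) < 2 ^ n := pow_pos (by norm_num) n
  rw [div_lt_iff₀ hc] at hn
  nlinarith

end Aux

/-- For a number field `K` of degree `d` with unit rank `r ≥ 1`,
`ρ_∞(K) ≥ (d/s)·b(𝓞_K^×)`, where `s` is the number of infinite places. -/
theorem rhoInf_ge_bUnits (K : Type) [Field K] [NumberField K]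
    (hr : 1 ≤ NumberField.Units.rank K) :
    (Module.finrank ℚ K : ℝ) / (Fintype.card (NumberField.InfinitePlace K) : ℝ) *
      bUnits K ≤ rhoInf K := by
  set d : ℝ := (Module.finrank ℚ K : ℝ) with hd'
  set s : ℝ := (Fintype.card (NumberField.InfinitePlace K) : ℝ) with hs'
  have hd : 0 < d := by
    have := Module.finrank_pos (R := ℚ) (M := K)
    positivity
  have hs : 0 < s := by
    have : 0 < Fintype.card (NumberField.InfinitePlace K) := Fintype.card_pos
    positivity
  rcases le_or_gt (bUnits K) 0 with hb | hb
  · have h1 : d / s * bUnits K ≤ 0 := mul_nonpos_of_nonneg_of_nonpos (by positivity) hb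
    refine h1.trans ?_
    exact Real.iSup_nonneg fun v => Real.iInf_nonneg fun u => norm_nonneg _
  · have hlow : ∀ u : (𝓞 K)ˣ, logEmb K u ≠ 0 → 2 * (d / s * bUnits K) ≤ ‖logEmb K u‖ := by
      intro u h
      have hnt : ¬ IsOfFinOrder u := fun hf => h ((logEmb_eq_zero_iff K u).mpr hf)
      have := key_lower K u hnt
      rw [← hd', ← hs'] at this
      linarith
    obtain ⟨u₀, hu0, hgood⟩ := exists_good K hr (2 * (d / s * bUnits K))
      (by positivity) hlow
    set v0 : NumberField.InfinitePlace K → ℝ := (2⁻¹ : ℝ) • logEmb K u₀ with hv0'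
    have hv0 : ∑ w, v0 w = 0 := by
      simp only [hv0', Pi.smul_apply, smul_eq_mul, ← Finset.mul_sum, logEmb_sum, mul_zero]
    have hkey : ∀ u : (𝓞 K)ˣ, d / s * bUnits K ≤ ‖v0 - logEmb K u‖ := by
      intro u
      set z : (𝓞 K)ˣ := u₀ * u⁻¹ * u⁻¹ with hz'
      have hz : logEmb K z = logEmb K u₀ - (2 : ℝ) • logEmb K u := by
        rw [hz', logEmb_mul, logEmb_mul, logEmb_inv]
        funext w
        simp only [Pi.add_apply, Pi.sub_apply, Pi.neg_apply, Pi.smul_apply, smul_eq_mul]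
        ring
      have hz0 : logEmb K z ≠ 0 := by
        intro h0
        apply hgood u
        have h2 : logEmb K u₀ = (2 : ℝ) • logEmb K u := by
          have := hz ▸ h0
          rwa [sub_eq_zero] at this
        rw [logEmb_mul, h2]
        funext w
        simp only [Pi.add_apply, Pi.smul_apply, smul_eq_mul]
        ring
      have heq : v0 - logEmb K u = (2⁻¹ : ℝ) • logEmb K z := by
        rw [hz]
        funext w
        simp only [hv0', Pi.sub_apply, Pi.smul_apply, smul_eq_mul]
        ring
      rw [heq, norm_smul]
      have h3 := hlow z hz0
      rw [Real.norm_eq_abs, abs_of_pos (by norm_num : (0:ℝ) < 2⁻¹)]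
      linarith
    calc d / s * bUnits K
        ≤ ⨅ u : (𝓞 K)ˣ, ‖((⟨v0, hv0⟩ : {v : NumberField.InfinitePlace K → ℝ // ∑ w, v w = 0}) :
            NumberField.InfinitePlace K → ℝ) - logEmb K u‖ := le_ciInf hkey
      _ ≤ rhoInf K := le_ciSup (bddAboveRange K) ⟨v0, hv0⟩
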